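/- For all integers n, k, p with n > k ≥ 1 and p ≥ 2, ((sqrt(n−k) + sqrt(k+p) + 7)² / (n−k)) · (16 e² (k+p) / (p+1)²) · (p−1) > 1. Consequently, for ℓ = k + p and p ≥ 2, the expected Frobenius error bound sqrt(Σ_{j>k} σ_j² + (k τ_k^{4q}(n−k)/(p−1)) σ_{k+1}²) for randomized subspace iteration is sharper than the bound sqrt(Σ_{j>k} σ_j² + k τ_k^{4q}(n−k) C² σ_{k+1}²) with C = (sqrt(n−k) + sqrt(k+p) + 7)·(4 e sqrt(k+p)/(p+1)). -/

import Mathlib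

open scoped BigOperators

noncomputable section

set_option maxHeartbeats 1600000 in
/-- **Comparison with Gu's bound** (Remark A.2).  For all integers `n > k ≥ 1` and `p ≥ 2`,
`((√(n-k) + √(k+p) + 7)²/(n-k)) · (16 e² (k+p)/(p+1)²) · (p-1) > 1`.  Consequently, for
`ℓ = k+p` and `p ≥ 2`, the expected Frobenius error bound
`√(∑_{j>k} σ_j² + (k τ_k^{4q} (n-k)/(p-1)) σ_{k+1}²)` for randomized subspace iteration is
sharper than (i.e. at most) the bound `√(∑_{j>k} σ_j² + k τ_k^{4q} (n-k) C² σ_{k+1}²)` with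
`C = (√(n-k) + √(k+p) + 7)(4 e √(k+p)/(p+1))`. -/
theorem sharper_than_gu (n k p : ℕ) (hkn : k < n) (hk : 1 ≤ k) (hp : 2 ≤ p) :
    1 < ((Real.sqrt ((n : ℝ) - k) + Real.sqrt ((k : ℝ) + p) + 7) ^ 2 / ((n : ℝ) - k)) *
        (16 * Real.exp 1 ^ 2 * ((k : ℝ) + p) / ((p : ℝ) + 1) ^ 2) * ((p : ℝ) - 1) ∧
      ∀ (s σ τ : ℝ) (q : ℕ), 0 ≤ s → 0 ≤ σ → 0 ≤ τ →
        Real.sqrt (s + ((k : ℝ) * τ ^ (4 * q) * ((n : ℝ) - k) / ((p : ℝ) - 1)) * σ ^ 2) ≤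
          Real.sqrt (s + (k : ℝ) * τ ^ (4 * q) * ((n : ℝ) - k) *
            ((Real.sqrt ((n : ℝ) - k) + Real.sqrt ((k : ℝ) + p) + 7) *
              (4 * Real.exp 1 * Real.sqrt ((k : ℝ) + p) / ((p : ℝ) + 1))) ^ 2 * σ ^ 2) := by
  have hN : (1:ℝ) ≤ (n:ℝ) - k := by
    have : (k:ℝ) + 1 ≤ (n:ℝ) := by exact_mod_cast hkn
    linarith
  have hP : (2:ℝ) ≤ (p:ℝ) := by exact_mod_cast hp
  have hK : (1:ℝ) ≤ (k:ℝ) := by exact_mod_cast hk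
  set a := Real.sqrt ((n:ℝ) - k) with ha
  set b := Real.sqrt ((k:ℝ) + p) with hb
  set E := Real.exp 1 with hEdef
  have ha2 : a ^ 2 = (n:ℝ) - k := Real.sq_sqrt (by linarith)
  have hb2 : b ^ 2 = (k:ℝ) + p := Real.sq_sqrt (by positivity)
  have ha0 : 0 ≤ a := Real.sqrt_nonneg _
  have hb0 : 0 ≤ b := Real.sqrt_nonneg _
  have hE : (2:ℝ) < E := by
    have := Real.exp_one_gt_d9; rw [hEdef]; linarith
  have hE0 : 0 < E := by linarith
  clear_value a b E
  have hN0 : (0:ℝ) < (n:ℝ) - k := by linarith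
  have hp1 : (0:ℝ) < (p:ℝ) + 1 := by linarith
  have hpm : (0:ℝ) < (p:ℝ) - 1 := by linarith
  have hS2 : (49:ℝ) ≤ (a + b + 7) ^ 2 := by nlinarith [mul_nonneg ha0 hb0]
  have hS2N : (n:ℝ) - k ≤ (a + b + 7) ^ 2 := by nlinarith [mul_nonneg ha0 hb0]
  have hE4 : (4:ℝ) ≤ E ^ 2 := by nlinarith
  have hbb : (p:ℝ) + 1 ≤ b ^ 2 := by rw [hb2]; linarith
  -- core inequality : (p+1)^2 < 16 E^2 (k+p) (p-1)
  have hstep : ((p:ℝ) + 1) ^ 2 < 16 * E ^ 2 * ((k:ℝ) + p) * ((p:ℝ) - 1) := by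
    have h1 : ((p:ℝ) + 1) ^ 2 ≤ 64 * (((p:ℝ) + 1) * ((p:ℝ) - 1)) := by nlinarith
    have hpp : (0:ℝ) < ((p:ℝ) + 1) * ((p:ℝ) - 1) := by positivity
    have h16 : (64:ℝ) < 16 * E ^ 2 := by nlinarith
    have h2 : 64 * (((p:ℝ) + 1) * ((p:ℝ) - 1)) < 16 * E ^ 2 * (((p:ℝ) + 1) * ((p:ℝ) - 1)) :=
      mul_lt_mul_of_pos_right h16 hpp
    have h3 : 16 * E ^ 2 * (((p:ℝ) + 1) * ((p:ℝ) - 1)) ≤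
        16 * E ^ 2 * (((k:ℝ) + p) * ((p:ℝ) - 1)) := by
      apply mul_le_mul_of_nonneg_left _ (by positivity)
      apply mul_le_mul_of_nonneg_right (by linarith) (by linarith)
    linarith [h1, h2, h3]
  constructor
  · have heq : ((a + b + 7) ^ 2 / ((n:ℝ) - k)) *
        (16 * E ^ 2 * ((k:ℝ) + p) / ((p:ℝ) + 1) ^ 2) * ((p:ℝ) - 1) =
        ((a + b + 7) ^ 2 * (16 * E ^ 2 * ((k:ℝ) + p) * ((p:ℝ) - 1))) /
          (((n:ℝ) - k) * ((p:ℝ) + 1) ^ 2) := by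
      field_simp
    rw [heq, lt_div_iff₀ (by positivity), one_mul]
    calc ((n:ℝ) - k) * ((p:ℝ) + 1) ^ 2
        < ((n:ℝ) - k) * (16 * E ^ 2 * ((k:ℝ) + p) * ((p:ℝ) - 1)) :=
          mul_lt_mul_of_pos_left hstep hN0
      _ ≤ (a + b + 7) ^ 2 * (16 * E ^ 2 * ((k:ℝ) + p) * ((p:ℝ) - 1)) := by
          apply mul_le_mul_of_nonneg_right hS2N
          nlinarith [hE4]
  · intro s σ τ q hs hσ hτ
    apply Real.sqrt_le_sqrt
    have hA : 0 ≤ (k:ℝ) * τ ^ (4 * q) * ((n:ℝ) - k) := by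
      apply mul_nonneg (mul_nonneg (by linarith) (by positivity)) (by linarith)
    have key : 1 / ((p:ℝ) - 1) ≤ ((a + b + 7) * (4 * E * b / ((p:ℝ) + 1))) ^ 2 := by
      have hrw : ((a + b + 7) * (4 * E * b / ((p:ℝ) + 1))) ^ 2 =
          ((a + b + 7) ^ 2 * (16 * E ^ 2 * b ^ 2)) / ((p:ℝ) + 1) ^ 2 := by
        field_simp
        ring
      rw [hrw, div_le_div_iff₀ hpm (by positivity), one_mul]
      apply le_of_lt
      calc ((p:ℝ) + 1) ^ 2 < 16 * E ^ 2 * ((k:ℝ) + p) * ((p:ℝ) - 1) := hstep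
        _ = 1 * (16 * E ^ 2 * b ^ 2 * ((p:ℝ) - 1)) := by rw [hb2]; ring
        _ ≤ (a + b + 7) ^ 2 * (16 * E ^ 2 * b ^ 2 * ((p:ℝ) - 1)) := by
            apply mul_le_mul_of_nonneg_right (by linarith)
            have : (0:ℝ) ≤ b ^ 2 := sq_nonneg b
            nlinarith [hE4]
        _ = (a + b + 7) ^ 2 * (16 * E ^ 2 * b ^ 2) * ((p:ℝ) - 1) := by ring
    have h3 : (k:ℝ) * τ ^ (4 * q) * ((n:ℝ) - k) / ((p:ℝ) - 1) * σ ^ 2 =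
        (k:ℝ) * τ ^ (4 * q) * ((n:ℝ) - k) * (1 / ((p:ℝ) - 1)) * σ ^ 2 := by ring
    have h2 : (k:ℝ) * τ ^ (4 * q) * ((n:ℝ) - k) / ((p:ℝ) - 1) * σ ^ 2 ≤
        (k:ℝ) * τ ^ (4 * q) * ((n:ℝ) - k) *
          ((a + b + 7) * (4 * E * b / ((p:ℝ) + 1))) ^ 2 * σ ^ 2 := by
      rw [h3]
      exact mul_le_mul_of_nonneg_right (mul_le_mul_of_nonneg_left key hA) (sq_nonneg σ)
    linarith

end
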